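/- Let (G, μ, ω) be an infinite, connected, locally finite weighted graph, and d an intrinsic pseudo metric with finite jump size s such that all balls B_r(x) are finite. Let V : G → ℝ satisfy V(x) ≥ c₀[d(x,x₀)+k]^(-α) for some c₀ > 0, k > s, 0 < α ≤ 2. Let u : G → ℝ satisfy Δu = Vu on G and Σ_x |u(x)|^p [d(x,x₀)+k]^(-β) μ(x) < ∞ for some β > 0 and p ≥ 2 with p ≥ (β²/(2c₀)) (k^(β+1)/(k-s)^(β+1))². Then u ≡ 0 on G. -/

import Mathlib

open Real

noncomputable def graphLap {G : Type*} (μ : G → ℝ) (ω : G → G → ℝ) (f : G → ℝ) (x : G) : ℝ :=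
  (μ x)⁻¹ * ∑' y, ω x y * (f y - f x)

lemma aux_bern {x q : ℝ} (hx : 0 ≤ x) (hq : 1 ≤ q) : 1 + q * (x - 1) ≤ x ^ q := by
  have h := one_add_mul_self_le_rpow_one_add (s := x - 1) (by linarith) hq
  have e : (1 : ℝ) + (x - 1) = x := by ring
  rwa [e] at h

lemma aux_bern2 {a b q : ℝ} (ha : 0 < a) (hb : 0 ≤ b) (hq : 1 ≤ q) :
    a ^ q + q * a ^ (q - 1) * (b - a) ≤ b ^ q := by
  have h1 := aux_bern (x := b / a) (div_nonneg hb ha.le) hq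
  have h2 : (b / a) ^ q = b ^ q / a ^ q := div_rpow hb ha.le q
  have haq : 0 < a ^ q := rpow_pos_of_pos ha q
  have h3 := mul_le_mul_of_nonneg_right h1 haq.le
  rw [h2, div_mul_cancel₀ _ haq.ne'] at h3
  have e1 : a ^ (q - 1) * a = a ^ q := by
    have h := Real.rpow_add_one ha.ne' (q - 1)
    rw [sub_add_cancel] at h
    exact h.symm
  have e2 : b / a * a ^ q = b * a ^ (q - 1) := by
    rw [← e1]; field_simp
  have e3 : (1 + q * (b / a - 1)) * a ^ q = a ^ q + q * (b / a * a ^ q) - q * a ^ q := by ring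
  rw [e3, e2] at h3
  nlinarith [e1]

lemma aux_mvt {γ a b : ℝ} (hγ : 0 < γ) (ha : 0 < a) (hab : a ≤ b) :
    a ^ (-γ) - b ^ (-γ) ≤ γ * a ^ (-γ - 1) * (b - a) := by
  have hb : 0 < b := lt_of_lt_of_le ha hab
  have hbern := aux_bern2 (a := b) (b := a) (q := γ + 1) hb ha.le (by linarith)
  have eb : b ^ (γ + 1 - 1) = b ^ γ := by norm_num
  rw [eb] at hbern
  have hpos : (0:ℝ) < a ^ (γ + 1) * b ^ γ := by positivity
  refine le_of_mul_le_mul_right ?_ hpos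
  have h3 : (a ^ (-γ) - b ^ (-γ)) * (a ^ (γ + 1) * b ^ γ) = a * b ^ γ - a ^ (γ + 1) := by
    have f1 : a ^ (-γ) * a ^ (γ + 1) = a := by
      rw [← rpow_add ha]; norm_num
    have f2 : b ^ (-γ) * b ^ γ = 1 := by
      rw [← rpow_add hb]; norm_num
    calc (a ^ (-γ) - b ^ (-γ)) * (a ^ (γ + 1) * b ^ γ)
        = (a ^ (-γ) * a ^ (γ + 1)) * b ^ γ - (b ^ (-γ) * b ^ γ) * a ^ (γ + 1) := by ring
      _ = a * b ^ γ - a ^ (γ + 1) := by rw [f1, f2]; ring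
  have h4 : γ * a ^ (-γ - 1) * (b - a) * (a ^ (γ + 1) * b ^ γ) = γ * (b - a) * b ^ γ := by
    have f3 : a ^ (-γ - 1) * a ^ (γ + 1) = 1 := by
      rw [← rpow_add ha]; norm_num
    calc γ * a ^ (-γ - 1) * (b - a) * (a ^ (γ + 1) * b ^ γ)
        = γ * (b - a) * b ^ γ * (a ^ (-γ - 1) * a ^ (γ + 1)) := by ring
      _ = γ * (b - a) * b ^ γ := by rw [f3]; ring
  rw [h3, h4]
  have hbγ : 0 < b ^ γ := rpow_pos_of_pos hb _
  have eb2 : b ^ (γ + 1) = b ^ γ * b := by rw [rpow_add hb, rpow_one]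
  nlinarith [hbern]

lemma aux_clamp_lip (a b : ℝ) :
    |min 1 (max 0 a) - min 1 (max 0 b)| ≤ |a - b| := by
  have h1 : |min 1 (max 0 a) - min 1 (max 0 b)| ≤ max |(1:ℝ) - 1| |max 0 a - max 0 b| :=
    abs_min_sub_min_le_max 1 (max 0 a) 1 (max 0 b)
  have h2 : |max 0 a - max 0 b| ≤ |a - b| := by
    rw [max_comm 0 a, max_comm 0 b]
    exact abs_max_sub_max_le_abs a b 0
  simpa using h1.trans (by simpa using h2)

lemma aux_sqhalf {p : ℝ} (x : ℝ) (hx : 0 ≤ x) : (x ^ (p/2))^2 = x ^ p := by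
  rw [← Real.rpow_natCast (x ^ (p/2)) 2, ← Real.rpow_mul hx]
  norm_num

lemma aux_rpow_sq {t : ℝ} (ht : 0 ≤ t) (e : ℝ) : (t ^ e)^2 = t ^ (2*e) := by
  rw [← Real.rpow_natCast (t ^ e) 2, ← Real.rpow_mul ht]
  ring_nf

lemma aux_key_pos {p : ℝ} (hp : 2 ≤ p) {a : ℝ} (b : ℝ) (ha : 0 < a) :
    p * (a ^ (p-2) * a * (b - a)) ≤ 2 * a ^ (p/2) * |b| ^ (p/2) - 2 * a ^ p := by
  have e1 : a ^ (p - 2) * a = a ^ (p - 1) := by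
    have h := Real.rpow_add_one ha.ne' (p - 2)
    have e : p - 2 + 1 = p - 1 := by ring
    rw [e] at h; exact h.symm
  have e3 : a ^ (p - 1) * a = a ^ p := by
    have h := Real.rpow_add_one ha.ne' (p - 1)
    rw [sub_add_cancel] at h; exact h.symm
  have hap : 0 < a ^ p := rpow_pos_of_pos ha _
  have hap1 : 0 < a ^ (p - 1) := rpow_pos_of_pos ha _
  have haph : 0 < a ^ (p/2) := rpow_pos_of_pos ha _
  have hbh : 0 ≤ |b| ^ (p/2) := rpow_nonneg (abs_nonneg b) _
  rw [e1]
  rcases le_or_gt 0 b with hb | hb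
  · have hber := aux_bern2 (a := a) (b := b) (q := p/2) ha hb (by linarith)
    have e4 : a ^ (p/2) * a ^ (p/2 - 1) = a ^ (p - 1) := by
      rw [← rpow_add ha]; congr 1; ring
    have habs : |b| ^ (p/2) = b ^ (p/2) := by rw [abs_of_nonneg hb]
    rw [habs]
    have h5 := mul_le_mul_of_nonneg_left hber (by positivity : (0:ℝ) ≤ 2 * a ^ (p/2))
    have e5 : a ^ (p/2) * a ^ (p/2) = a ^ p := by
      rw [← rpow_add ha]; congr 1; ring
    have e6 : 2 * a ^ (p/2) * (a ^ (p/2) + p/2 * a ^ (p/2 - 1) * (b - a))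
        = 2 * a ^ p + p * (a ^ (p-1) * (b - a)) := by
      rw [← e4, ← e5]; ring
    rw [e6] at h5
    linarith [h5]
  · have hbh' : 0 ≤ a ^ (p/2) * |b| ^ (p/2) := by positivity
    have h6 : b - a ≤ -a := by linarith
    have h7 : p * (a ^ (p-1) * (b - a)) ≤ p * (a ^ (p-1) * (-a)) := by
      have := mul_le_mul_of_nonneg_left h6 hap1.le
      nlinarith [this]
    have h8 : a ^ (p - 1) * (-a) = -(a ^ p) := by rw [← e3]; ring
    nlinarith [h7]

lemma aux_key {p : ℝ} (hp : 2 ≤ p) (a b : ℝ) :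
    p * (|a| ^ (p-2) * a * (b - a)) ≤ (|b| ^ p - |a| ^ p) - (|b| ^ (p/2) - |a| ^ (p/2))^2 := by
  have hp0 : p ≠ 0 := by linarith
  have ea : (|a| ^ (p/2))^2 = |a| ^ p := aux_sqhalf _ (abs_nonneg a)
  have eb : (|b| ^ (p/2))^2 = |b| ^ p := aux_sqhalf _ (abs_nonneg b)
  have hR : (|b| ^ p - |a| ^ p) - (|b| ^ (p/2) - |a| ^ (p/2))^2
      = 2 * |a| ^ (p/2) * |b| ^ (p/2) - 2 * |a| ^ p := by
    have e : (|b| ^ (p/2) - |a| ^ (p/2))^2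
        = (|b| ^ (p/2))^2 - 2 * (|b| ^ (p/2)) * (|a| ^ (p/2)) + (|a| ^ (p/2))^2 := by ring
    rw [e, ea, eb]; ring
  rw [hR]
  rcases lt_trichotomy a 0 with hlt | heq | hgt
  · have h := aux_key_pos hp (b := -b) (a := -a) (neg_pos.mpr hlt)
    rw [abs_neg] at h
    have eaa : (-a) = |a| := (abs_of_neg hlt).symm
    rw [eaa] at h
    have e9 : |a| ^ (p-2) * |a| * (-b - |a|) = |a| ^ (p-2) * a * (b - a) := by
      rw [abs_of_neg hlt]; ring
    rw [e9] at h
    exact h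
  · subst heq
    simp only [abs_zero]
    have hp2 : p/2 ≠ 0 := by intro h; apply hp0; linarith
    rw [Real.zero_rpow hp2, Real.zero_rpow hp0]
    simp
  · have h := aux_key_pos hp (b := b) (a := a) hgt
    have eaa : |a| = a := abs_of_pos hgt
    rw [eaa]
    exact h

lemma aux_edge (fx fy Px Py m : ℝ) (hm : |Px - Py| ≤ m) :
    (fy^2 - fx^2) * (Px^2 - Py^2) - (fy - fx)^2 * (Px^2 + Py^2) ≤ (fx^2 + fy^2) * m^2 := by
  have h1 : (Px - Py)^2 ≤ m^2 := by
    have := abs_nonneg (Px - Py)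
    nlinarith [sq_abs (Px - Py)]
  nlinarith [sq_nonneg ((fy - fx)*(Px + Py) + (Py - Px)*(fx + fy)),
    sq_nonneg ((fy - fx)*(Px - Py)), sq_nonneg (fx + fy), sq_nonneg (fy - fx),
    mul_le_mul_of_nonneg_right h1 (sq_nonneg (fx + fy)),
    sq_nonneg (fx - fy)]

lemma aux_Plip {β R P₀ Dx Dy ηx ηy dxy : ℝ} (hβ : 0 < β) (hR : 0 < R) (hP₀ : 0 < P₀)
    (hDy : 0 < Dy) (hyx : Dy ≤ Dx)
    (hηy1 : ηy ≤ 1) (hηy0 : 0 ≤ ηy)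
    (hlip : |ηx - ηy| ≤ dxy / R) (hd : Dx - Dy ≤ dxy) (hd0 : 0 ≤ dxy) :
    |max Dx P₀ ^ (-(β/2)) * ηx - max Dy P₀ ^ (-(β/2)) * ηy|
      ≤ ((β/2) * (max Dy P₀) ^ (-(β/2) - 1) + (max Dy P₀) ^ (-(β/2)) / R) * dxy := by
  set A : ℝ := max Dx P₀ ^ (-(β/2)) with hA_def
  set A' : ℝ := max Dy P₀ ^ (-(β/2)) with hA'_def
  have hMy : 0 < max Dy P₀ := lt_of_lt_of_le hDy (le_max_left _ _)
  have hMx : 0 < max Dx P₀ := lt_of_lt_of_le hMy (max_le_max hyx le_rfl)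
  have hA0 : 0 ≤ A := rpow_nonneg hMx.le _
  have hA'0 : 0 ≤ A' := rpow_nonneg hMy.le _
  have hAA' : A ≤ A' :=
    rpow_le_rpow_of_nonpos hMy (max_le_max hyx le_rfl) (by linarith : -(β/2) ≤ 0)
  have hQlip : max Dx P₀ - max Dy P₀ ≤ dxy := by
    have h1 := abs_max_sub_max_le_abs Dx Dy P₀
    have h2 : |Dx - Dy| = Dx - Dy := abs_of_nonneg (by linarith)
    have h3 := le_abs_self (max Dx P₀ - max Dy P₀)
    linarith
  have hmvt : A' - A ≤ (β/2) * (max Dy P₀) ^ (-(β/2) - 1) * (max Dx P₀ - max Dy P₀) := by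
    have := aux_mvt (γ := β/2) (a := max Dy P₀) (b := max Dx P₀)
      (by positivity) hMy (max_le_max hyx le_rfl)
    linarith [this]
  have hmvt2 : A' - A ≤ (β/2) * (max Dy P₀) ^ (-(β/2) - 1) * dxy := by
    have hnn : (0:ℝ) ≤ (β/2) * (max Dy P₀) ^ (-(β/2) - 1) := by positivity
    nlinarith [mul_le_mul_of_nonneg_left hQlip hnn]
  have hdecomp : A * ηx - A' * ηy = A * (ηx - ηy) + (A - A') * ηy := by ring
  have h1 : |A * (ηx - ηy)| ≤ A' * (dxy / R) := by
    rw [abs_mul, abs_of_nonneg hA0]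
    exact mul_le_mul hAA' hlip (abs_nonneg _) hA'0
  have h2 : |(A - A') * ηy| ≤ (A' - A) * 1 := by
    rw [abs_mul]
    have e1 : |A - A'| = A' - A := by rw [abs_sub_comm]; exact abs_of_nonneg (by linarith)
    rw [e1]
    apply mul_le_mul le_rfl (by rw [abs_of_nonneg hηy0]; exact hηy1) (abs_nonneg _) (by linarith)
  calc |A * ηx - A' * ηy| ≤ |A * (ηx - ηy)| + |(A - A') * ηy| := by
        rw [hdecomp]; exact abs_add_le _ _
    _ ≤ A' * (dxy / R) + (A' - A) * 1 := add_le_add h1 h2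
    _ ≤ A' * (dxy / R) + (β/2) * (max Dy P₀) ^ (-(β/2) - 1) * dxy := by linarith [hmvt2]
    _ = ((β/2) * (max Dy P₀) ^ (-(β/2) - 1) + (max Dy P₀) ^ (-(β/2)) / R) * dxy := by
        rw [hA'_def]; ring

lemma aux_kappasq {β R c₁ Qx q : ℝ} (hβ : 0 < β) (hR : 0 < R) (hc₁0 : 0 < c₁) (hc₁1 : c₁ ≤ 1)
    (hQx : 0 < Qx) (hq : c₁ * Qx ≤ q) :
    ((β/2) * q ^ (-(β/2) - 1) + q ^ (-(β/2)) / R)^2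
      ≤ c₁ ^ (-β-2) * ((β^2/2) * Qx ^ (-β-2) + 2 * Qx ^ (-β) / R^2) := by
  have hq0 : 0 < q := lt_of_lt_of_le (by positivity) hq
  have h1 : q ^ (-(β/2) - 1) ≤ c₁ ^ (-(β/2) - 1) * Qx ^ (-(β/2) - 1) := by
    have := rpow_le_rpow_of_nonpos (by positivity : (0:ℝ) < c₁ * Qx) hq (by linarith : -(β/2) - 1 ≤ 0)
    rwa [Real.mul_rpow hc₁0.le hQx.le] at this
  have h2 : q ^ (-(β/2)) ≤ c₁ ^ (-(β/2) - 1) * Qx ^ (-(β/2)) := by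
    have ha := rpow_le_rpow_of_nonpos (by positivity : (0:ℝ) < c₁ * Qx) hq (by linarith : -(β/2) ≤ 0)
    rw [Real.mul_rpow hc₁0.le hQx.le] at ha
    have hb : c₁ ^ (-(β/2)) ≤ c₁ ^ (-(β/2) - 1) :=
      rpow_le_rpow_of_exponent_ge hc₁0 hc₁1 (by linarith)
    have hc : 0 ≤ Qx ^ (-(β/2)) := rpow_nonneg hQx.le _
    nlinarith [mul_le_mul_of_nonneg_right hb hc]
  have hκnn : 0 ≤ (β/2) * q ^ (-(β/2) - 1) + q ^ (-(β/2)) / R := by positivity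
  have hκb : (β/2) * q ^ (-(β/2) - 1) + q ^ (-(β/2)) / R
      ≤ c₁ ^ (-(β/2) - 1) * ((β/2) * Qx ^ (-(β/2) - 1) + Qx ^ (-(β/2)) / R) := by
    have h3 : q ^ (-(β/2)) / R ≤ c₁ ^ (-(β/2) - 1) * Qx ^ (-(β/2)) / R := by gcongr
    have h4 : (β/2) * q ^ (-(β/2) - 1) ≤ (β/2) * (c₁ ^ (-(β/2) - 1) * Qx ^ (-(β/2) - 1)) := by
      apply mul_le_mul_of_nonneg_left h1 (by positivity)
    calc (β/2) * q ^ (-(β/2) - 1) + q ^ (-(β/2)) / R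
        ≤ (β/2) * (c₁ ^ (-(β/2) - 1) * Qx ^ (-(β/2) - 1)) + c₁ ^ (-(β/2) - 1) * Qx ^ (-(β/2)) / R :=
          add_le_add h4 h3
      _ = c₁ ^ (-(β/2) - 1) * ((β/2) * Qx ^ (-(β/2) - 1) + Qx ^ (-(β/2)) / R) := by ring
  have hsq := pow_le_pow_left₀ hκnn hκb 2
  have e1 : (c₁ ^ (-(β/2) - 1) * ((β/2) * Qx ^ (-(β/2) - 1) + Qx ^ (-(β/2)) / R))^2
      = (c₁ ^ (-(β/2) - 1))^2 * ((β/2) * Qx ^ (-(β/2) - 1) + Qx ^ (-(β/2)) / R)^2 := by ring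
  have e2 : (c₁ ^ (-(β/2) - 1))^2 = c₁ ^ (-β-2) := by
    rw [aux_rpow_sq hc₁0.le]; congr 1; ring
  have e3 : (Qx ^ (-(β/2) - 1))^2 = Qx ^ (-β-2) := by
    rw [aux_rpow_sq hQx.le]; congr 1; ring
  have e4 : (Qx ^ (-(β/2)))^2 = Qx ^ (-β) := by
    rw [aux_rpow_sq hQx.le]; congr 1; ring
  have h5 : ((β/2) * Qx ^ (-(β/2) - 1) + Qx ^ (-(β/2)) / R)^2
      ≤ (β^2/2) * Qx ^ (-β-2) + 2 * Qx ^ (-β) / R^2 := by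
    rw [← e3, ← e4]
    set X := Qx ^ (-(β/2) - 1)
    set Y := Qx ^ (-(β/2))
    have e : ((β/2) * X + Y / R)^2 = (((β/2)*X*R + Y)/R)^2 := by field_simp
    rw [e, div_pow, div_le_iff₀ (by positivity : (0:ℝ) < R^2)]
    have e2 : (β^2/2*X^2 + 2*Y^2/R^2)*R^2 = (β^2/2)*X^2*R^2 + 2*Y^2 := by
      field_simp
    rw [e2]
    nlinarith [sq_nonneg ((β/2)*X*R - Y)]
  have hcnn : 0 ≤ (c₁ ^ (-(β/2) - 1))^2 := sq_nonneg _
  calc ((β/2) * q ^ (-(β/2) - 1) + q ^ (-(β/2)) / R)^2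
      ≤ (c₁ ^ (-(β/2) - 1))^2 * ((β/2) * Qx ^ (-(β/2) - 1) + Qx ^ (-(β/2)) / R)^2 := by
        rw [← e1]; exact hsq
    _ ≤ (c₁ ^ (-(β/2) - 1))^2 * ((β^2/2) * Qx ^ (-β-2) + 2 * Qx ^ (-β) / R^2) :=
        mul_le_mul_of_nonneg_left h5 hcnn
    _ = c₁ ^ (-β-2) * ((β^2/2) * Qx ^ (-β-2) + 2 * Qx ^ (-β) / R^2) := by rw [e2]

lemma aux_ptwise {α β P₀ Dx : ℝ} (hα0 : 0 < α) (hα : α ≤ 2) (hβ : 0 < β)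
    (hP₀ : 0 < P₀) (hDx : 0 < Dx) :
    (max Dx P₀) ^ (-β-2) ≤ P₀ ^ (α-2) * (Dx ^ (-α) * (max Dx P₀) ^ (-β)) := by
  have hQ : 0 < max Dx P₀ := lt_of_lt_of_le hDx (le_max_left _ _)
  have e1 : (max Dx P₀) ^ (-β-2) = (max Dx P₀) ^ (-(2:ℝ)) * (max Dx P₀) ^ (-β) := by
    rw [← Real.rpow_add hQ]; congr 1; ring
  have e2 : (max Dx P₀) ^ (-(2:ℝ)) = (max Dx P₀) ^ (α-2) * (max Dx P₀) ^ (-α) := by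
    rw [← Real.rpow_add hQ]; congr 1; ring
  have h3 : (max Dx P₀) ^ (α-2) ≤ P₀ ^ (α-2) :=
    rpow_le_rpow_of_nonpos hP₀ (le_max_right _ _) (by linarith)
  have h4 : (max Dx P₀) ^ (-α) ≤ Dx ^ (-α) :=
    rpow_le_rpow_of_nonpos hDx (le_max_left _ _) (by linarith)
  have h5 : (max Dx P₀) ^ (-(2:ℝ)) ≤ P₀ ^ (α-2) * Dx ^ (-α) := by
    rw [e2]
    exact mul_le_mul h3 h4 (rpow_nonneg hQ.le _) (rpow_nonneg hP₀.le _)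
  calc (max Dx P₀) ^ (-β-2) = (max Dx P₀) ^ (-(2:ℝ)) * (max Dx P₀) ^ (-β) := e1
    _ ≤ (P₀ ^ (α-2) * Dx ^ (-α)) * (max Dx P₀) ^ (-β) :=
        mul_le_mul_of_nonneg_right h5 (rpow_nonneg hQ.le _)
    _ = P₀ ^ (α-2) * (Dx ^ (-α) * (max Dx P₀) ^ (-β)) := by ring

set_option maxHeartbeats 2000000 in
theorem uniqueness_p_ge_two {G : Type*} [Infinite G] (μ : G → ℝ) (ω d : G → G → ℝ)
    (hμ : ∀ x, 0 < μ x) (hω_nonneg : ∀ x y, 0 ≤ ω x y)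
    (hω_symm : ∀ x y, ω x y = ω y x) (hω_diag : ∀ x, ω x x = 0)
    (hω_sum : ∀ x, Summable (fun y => ω x y))
    (hconn : ∀ x y : G, Relation.ReflTransGen (fun a b => 0 < ω a b) x y)
    (hloc : ∀ x, {y | ω x y ≠ 0}.Finite)
    (hd_nonneg : ∀ x y, 0 ≤ d x y) (hd_self : ∀ x, d x x = 0)
    (hd_symm : ∀ x y, d x y = d y x)
    (hd_tri : ∀ x y z, d x y ≤ d x z + d z y)
    (hintrinsic : ∀ x, ∑' y, ω x y * d x y ^ 2 ≤ μ x)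
    (s : ℝ) (hjump : ∀ x y, 0 < ω x y → d x y ≤ s)
    (hballs : ∀ (x : G) (r : ℝ), {y | d x y < r}.Finite)
    (x₀ : G) (V : G → ℝ) (c₀ k α : ℝ) (hc₀ : 0 < c₀) (hk : s < k)
    (hα0 : 0 < α) (hα : α ≤ 2)
    (hV : ∀ x, V x ≥ c₀ * (d x x₀ + k) ^ (-α))
    (u : G → ℝ) (hu : ∀ x, graphLap μ ω u x = V x * u x)
    (β p : ℝ) (hβ : 0 < β) (hp2 : 2 ≤ p)
    (hp : p ≥ β ^ 2 / (2 * c₀) * (k ^ (β + 1) / (k - s) ^ (β + 1)) ^ 2)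
    (husum : Summable (fun x => |u x| ^ p * (d x x₀ + k) ^ (-β) * μ x)) :
    ∀ x, u x = 0 := by
  classical
  -- jump size is positive
  have hs_pos : 0 < s := by
    by_contra hns
    push_neg at hns
    have hall : ∀ y : G, d x₀ y = 0 := by
      intro y
      have hy := hconn x₀ y
      induction hy with
      | refl => exact hd_self x₀
      | @tail b c hab hbc ih =>
        have hd1 : d b c = 0 :=
          le_antisymm (le_trans (hjump _ _ hbc) hns) (hd_nonneg _ _)
        have h2 := hd_tri x₀ c b
        have h3 := hd_nonneg x₀ c
        rw [ih, hd1] at h2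
        linarith
    have huniv : {y : G | d x₀ y < 1} = Set.univ := by
      ext y; simp [hall y]
    have hfin := hballs x₀ 1
    rw [huniv] at hfin
    exact Set.infinite_univ hfin
  have hk0 : 0 < k := hs_pos.trans hk
  have hks : 0 < k - s := by linarith
  have hp0 : 0 < p := by linarith
  have hpc : 0 < p * c₀ := by positivity
  -- the distance-type function
  set D : G → ℝ := fun x => d x x₀ + k with hD_def
  have hDk : ∀ x, k ≤ D x := fun x => by
    simp only [hD_def]; have := hd_nonneg x x₀; linarith
  have hD0 : ∀ x, 0 < D x := fun x => lt_of_lt_of_le hk0 (hDk x)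
  have hDlip : ∀ x y, |D x - D y| ≤ d x y := by
    intro x y
    rw [abs_le]
    constructor
    · have h1 := hd_tri y x₀ x
      have h2 : d y x = d x y := hd_symm y x
      simp only [hD_def]
      rw [h2] at h1
      linarith
    · have h1 := hd_tri x x₀ y
      simp only [hD_def]
      linarith
  -- the constant c₁
  set c₁ : ℝ := (k - s)/k with hc₁_def
  have hc₁0 : 0 < c₁ := by positivity
  have hc₁1 : c₁ ≤ 1 := by
    rw [hc₁_def, div_le_one hk0]; linarith
  have hc₁lt : c₁ < 1 := by
    rw [hc₁_def, div_lt_one hk0]; linarith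
  -- choice of the truncation point P₀
  obtain ⟨P₀, hP₀k, hP₀⟩ :
      ∃ P₀ : ℝ, k ≤ P₀ ∧ β^2 * c₁ ^ (-β-2) < 2*p*c₀ * P₀ ^ (2-α) := by
    by_cases hα2 : α = 2
    · refine ⟨k, le_refl k, ?_⟩
      rw [hα2]
      have e0 : (2:ℝ) - 2 = 0 := by norm_num
      rw [e0, Real.rpow_zero, mul_one]
      have ht : k ^ (β+1) / (k-s) ^ (β+1) = c₁ ^ (-(β+1)) := by
        rw [Real.rpow_neg hc₁0.le, hc₁_def, Real.div_rpow hks.le hk0.le, inv_div]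
      have ht2 : (k ^ (β+1) / (k-s) ^ (β+1))^2 = c₁ ^ (2*(-(β+1))) := by
        rw [ht, aux_rpow_sq hc₁0.le]
      have hmul := mul_le_mul_of_nonneg_left hp (by positivity : (0:ℝ) ≤ 2*c₀)
      have e1 : 2*c₀ * (β^2/(2*c₀) * (k ^ (β+1) / (k-s) ^ (β+1))^2)
          = β^2 * (k ^ (β+1) / (k-s) ^ (β+1))^2 := by
        field_simp
      have h2pc : β^2 * c₁ ^ (2*(-(β+1))) ≤ 2*p*c₀ := by
        rw [← ht2]
        nlinarith [hmul, e1]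
      have hcc : c₁ ^ (-β-2) < c₁ ^ (2*(-(β+1))) :=
        Real.rpow_lt_rpow_of_exponent_gt hc₁0 hc₁lt (by linarith)
      nlinarith [mul_lt_mul_of_pos_left hcc (by positivity : (0:ℝ) < β^2), h2pc]
    · have hα2' : 0 < 2 - α := by
        rcases lt_or_eq_of_le hα with h | h
        · linarith
        · exact absurd h hα2
      set X : ℝ := β^2 * c₁ ^ (-β-2) / (2*p*c₀) with hX_def
      have hX0 : 0 ≤ X := by positivity
      refine ⟨max k ((X+1) ^ (2-α)⁻¹), le_max_left _ _, ?_⟩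
      have hY0 : (0:ℝ) ≤ (X+1) ^ (2-α)⁻¹ := rpow_nonneg (by linarith) _
      have h1 : ((X+1) ^ (2-α)⁻¹) ^ (2-α) = X + 1 := by
        rw [← Real.rpow_mul (by linarith : (0:ℝ) ≤ X + 1)]
        rw [inv_mul_cancel₀ hα2'.ne']
        exact Real.rpow_one _
      have h2 : ((X+1) ^ (2-α)⁻¹) ^ (2-α) ≤ (max k ((X+1) ^ (2-α)⁻¹)) ^ (2-α) :=
        Real.rpow_le_rpow hY0 (le_max_right _ _) hα2'.le
      rw [h1] at h2
      have h3 : 2*p*c₀ * (X+1) ≤ 2*p*c₀ * (max k ((X+1) ^ (2-α)⁻¹)) ^ (2-α) := by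
        apply mul_le_mul_of_nonneg_left h2 (by positivity)
      have h4 : 2*p*c₀ * X = β^2 * c₁ ^ (-β-2) := by
        rw [hX_def]; field_simp
      nlinarith [h3, h4, hpc]
  have hP₀0 : 0 < P₀ := lt_of_lt_of_le hk0 hP₀k
  -- the constant lam
  set lam : ℝ := β^2 * c₁ ^ (-β-2) * P₀ ^ (α-2) / (2*p*c₀) with hlam_def
  have hPexp : P₀ ^ (α-2) = (P₀ ^ (2-α))⁻¹ := by
    rw [← Real.rpow_neg hP₀0.le]
    congr 1; ring
  have hlam0 : 0 ≤ lam := by positivity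
  have hlam1 : lam < 1 := by
    rw [hlam_def, div_lt_one (by positivity)]
    rw [hPexp]
    rw [mul_inv_lt_iff₀ (rpow_pos_of_pos hP₀0 _)]
    calc β^2 * c₁ ^ (-β-2) < 2*p*c₀ * P₀ ^ (2-α) := hP₀
      _ = 2*p*c₀ * P₀ ^ (2-α) := rfl
  -- basic functions
  set f : G → ℝ := fun x => |u x| ^ (p/2) with hf_def
  have hf0 : ∀ x, 0 ≤ f x := fun x => rpow_nonneg (abs_nonneg _) _
  set g : G → ℝ := fun x => f x ^ 2 with hg_def
  have hg0 : ∀ x, 0 ≤ g x := fun x => sq_nonneg _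
  have hgu : ∀ x, g x = |u x| ^ p := fun x => aux_sqhalf _ (abs_nonneg _)
  set Q : G → ℝ := fun x => max (D x) P₀ with hQ_def
  have hQ0 : ∀ x, 0 < Q x := fun x => lt_of_lt_of_le (hD0 x) (le_max_left _ _)
  have hQD : ∀ x, D x ≤ Q x := fun x => le_max_left _ _
  have hQP : ∀ x, P₀ ≤ Q x := fun x => le_max_right _ _
  set w : G → ℝ := fun x => Q x ^ (-β) with hw_def
  have hw0 : ∀ x, 0 < w x := fun x => rpow_pos_of_pos (hQ0 x) _
  have hwD : ∀ x, w x ≤ D x ^ (-β) := fun x =>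
    Real.rpow_le_rpow_of_nonpos (hD0 x) (hQD x) (by linarith)
  set T : G → ℝ := fun x => μ x * (g x * (D x ^ (-α) * w x)) with hT_def
  have hT0 : ∀ x, 0 ≤ T x := by
    intro x
    have := hw0 x
    have := rpow_nonneg (hD0 x).le (-α)
    have := hg0 x
    have := (hμ x).le
    positivity
  have hTle : ∀ x, T x ≤ k ^ (-α) * (|u x| ^ p * D x ^ (-β) * μ x) := by
    intro x
    have h1 : D x ^ (-α) ≤ k ^ (-α) :=
      Real.rpow_le_rpow_of_nonpos hk0 (hDk x) (by linarith)
    have h3 : D x ^ (-α) * w x ≤ k ^ (-α) * D x ^ (-β) :=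
      mul_le_mul h1 (hwD x) (hw0 x).le (rpow_nonneg hk0.le _)
    calc T x = μ x * (|u x| ^ p * (D x ^ (-α) * w x)) := by rw [hT_def]; simp only []; rw [hgu]
      _ ≤ μ x * (|u x| ^ p * (k ^ (-α) * D x ^ (-β))) := by
          apply mul_le_mul_of_nonneg_left
            (mul_le_mul_of_nonneg_left h3 (rpow_nonneg (abs_nonneg _) _)) (hμ x).le
      _ = k ^ (-α) * (|u x| ^ p * D x ^ (-β) * μ x) := by ring
  have hTsum : Summable T :=
    Summable.of_nonneg_of_le hT0 hTle (husum.mul_left _)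
  set Tw : G → ℝ := fun x => μ x * (g x * w x) with hTw_def
  have hTw0 : ∀ x, 0 ≤ Tw x := by
    intro x
    have := hw0 x
    have := hg0 x
    have := (hμ x).le
    positivity
  have hTwle : ∀ x, Tw x ≤ |u x| ^ p * D x ^ (-β) * μ x := by
    intro x
    calc Tw x = μ x * (|u x| ^ p * w x) := by rw [hTw_def]; simp only []; rw [hgu]
      _ ≤ μ x * (|u x| ^ p * D x ^ (-β)) := by
          apply mul_le_mul_of_nonneg_left
            (mul_le_mul_of_nonneg_left (hwD x) (rpow_nonneg (abs_nonneg _) _)) (hμ x).le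
      _ = |u x| ^ p * D x ^ (-β) * μ x := by ring
  have hTwsum : Summable Tw :=
    Summable.of_nonneg_of_le hTw0 hTwle husum
  -- pointwise unfolding helpers
  have hDeq : ∀ z, D z = d z x₀ + k := fun z => by rw [hD_def]
  have hfeq : ∀ z, f z = |u z| ^ (p/2) := fun z => by rw [hf_def]
  have hgeq : ∀ z, g z = f z ^ 2 := fun z => by rw [hg_def]
  have hQeq : ∀ z, Q z = max (D z) P₀ := fun z => by rw [hQ_def]
  have hweq : ∀ z, w z = Q z ^ (-β) := fun z => by rw [hw_def]
  have hTeq : ∀ z, T z = μ z * (g z * (D z ^ (-α) * w z)) := fun z => by rw [hT_def]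
  have hTweq : ∀ z, Tw z = μ z * (g z * w z) := fun z => by rw [hTw_def]
  have hEQ : ∀ x, ∑' y, ω x y * (u y - u x) = μ x * (V x * u x) := by
    intro x
    have h1 := hu x
    simp only [graphLap] at h1
    have h2 : μ x * ((μ x)⁻¹ * ∑' y, ω x y * (u y - u x)) = μ x * (V x * u x) := by rw [h1]
    rwa [← mul_assoc, mul_inv_cancel₀ (hμ x).ne', one_mul] at h2
  have hgid : ∀ x, |u x| ^ (p-2) * u x * u x = g x := by
    intro x
    rw [hgu]
    rcases eq_or_ne (u x) 0 with h0 | h0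
    · rw [h0]
      simp [Real.zero_rpow (by linarith : p ≠ 0)]
    · have habs : 0 < |u x| := abs_pos.mpr h0
      have e : |u x| ^ (p-2) * |u x| * |u x| = |u x| ^ p := by
        rw [← Real.rpow_add_one habs.ne', ← Real.rpow_add_one habs.ne']
        congr 1; ring
      calc |u x| ^ (p-2) * u x * u x = |u x| ^ (p-2) * (|u x| * |u x|) := by
            rw [abs_mul_abs_self]; ring
        _ = |u x| ^ p := by rw [← e]; ring
  -- the main Caccioppoli-type inequality, for every scale R
  have main : ∀ R : ℝ, 1 ≤ R → ∀ F : Finset G, (∀ x ∈ F, D x ≤ R) →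
      p * c₀ * ∑ x ∈ F, T x
        ≤ p * c₀ * (lam * ∑' x, T x) + (2 * c₁ ^ (-β-2) / R^2) * ∑' x, Tw x := by
    intro R hR F hF
    have hRpos : 0 < R := lt_of_lt_of_le one_pos hR
    -- cutoff function
    set η : G → ℝ := fun x => min 1 (max 0 (2 - D x / R)) with hη_def
    have hηeq : ∀ z, η z = min 1 (max 0 (2 - D z / R)) := fun z => by rw [hη_def]
    have hη0 : ∀ x, 0 ≤ η x := fun x => le_min zero_le_one (le_max_left 0 _)
    have hη1 : ∀ x, η x ≤ 1 := fun x => min_le_left _ _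
    have hηlip : ∀ x y, |η x - η y| ≤ d x y / R := by
      intro x y
      have h1 := aux_clamp_lip (2 - D x / R) (2 - D y / R)
      have e : (2 - D x / R) - (2 - D y / R) = (D y - D x)/R := by ring
      rw [e] at h1
      have h2 : |(D y - D x)/R| = |D y - D x|/R := by
        rw [abs_div, abs_of_pos hRpos]
      rw [h2] at h1
      have h3 : |D y - D x| ≤ d x y := by rw [abs_sub_comm]; exact hDlip x y
      have h4 : |D y - D x| / R ≤ d x y / R := by gcongr
      rw [hηeq x, hηeq y]
      exact h1.trans h4
    have hηz : ∀ x, η x ≠ 0 → D x < 2*R := by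
      intro x hx
      by_contra hge
      push_neg at hge
      apply hx
      have h1 : 2 - D x / R ≤ 0 := by
        have : 2 ≤ D x / R := by rw [le_div_iff₀ hRpos]; linarith
        linarith
      rw [hηeq x, max_eq_left h1]
      exact min_eq_right zero_le_one
    have hηone : ∀ x, D x ≤ R → η x = 1 := by
      intro x hx
      have h1 : D x / R ≤ 1 := by rw [div_le_one hRpos]; exact hx
      have h2 : (1:ℝ) ≤ 2 - D x / R := by linarith
      rw [hηeq x, max_eq_right (by linarith : (0:ℝ) ≤ 2 - D x / R)]
      exact min_eq_left h2
    -- the finite ball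
    set B : Finset G := (hballs x₀ (2*R + s)).toFinset with hB_def
    have hBmem : ∀ y, y ∈ B ↔ d x₀ y < 2*R + s := fun y => (hballs x₀ (2*R+s)).mem_toFinset
    have hC1 : ∀ x, η x ≠ 0 → ∀ y, ω x y ≠ 0 → y ∈ B := by
      intro x hx y hy
      rw [hBmem]
      have hωpos : 0 < ω x y := lt_of_le_of_ne (hω_nonneg x y) (Ne.symm hy)
      have h1 := hjump x y hωpos
      have h2 := hd_tri x₀ y x
      have h3 : d x₀ x = d x x₀ := hd_symm x₀ x
      have h4 : D x < 2*R := hηz x hx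
      have h5 : d x x₀ = D x - k := by rw [hDeq x]; ring
      linarith [hk0]
    -- the equation restricted to B
    have heqB : ∀ x, η x ≠ 0 → ∑ y ∈ B, ω x y * (u y - u x) = μ x * (V x * u x) := by
      intro x hx
      rw [← hEQ x]
      refine (tsum_eq_sum ?_).symm
      intro y hy
      have hz : ω x y = 0 := by
        by_contra hne
        exact hy (hC1 x hx y hne)
      rw [hz, zero_mul]
    -- weights
    set P : G → ℝ := fun x => Q x ^ (-(β/2)) * η x with hP2_def
    have hPeq : ∀ z, P z = Q z ^ (-(β/2)) * η z := fun z => by rw [hP2_def]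
    set W : G → ℝ := fun x => P x ^ 2 with hW_def
    have hWeqP : ∀ z, W z = P z ^ 2 := fun z => by rw [hW_def]
    have hW0 : ∀ x, 0 ≤ W x := fun x => by rw [hWeqP x]; exact sq_nonneg _
    have hWeq2 : ∀ x, W x = w x * η x ^ 2 := by
      intro x
      rw [hWeqP x, hPeq x, mul_pow]
      have e2 : (Q x ^ (-(β/2)))^2 = Q x ^ (-β) := by
        rw [aux_rpow_sq (hQ0 x).le]; congr 1; ring
      rw [e2, hweq x]
    have hWz : ∀ x, η x = 0 → W x = 0 := by
      intro x hx
      rw [hWeq2 x, hx]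
      ring
    -- the per-edge coefficient κ
    set q2 : G → G → ℝ := fun x y => max (min (D x) (D y)) P₀ with hq2_def
    have hq2eq : ∀ x y, q2 x y = max (min (D x) (D y)) P₀ := fun x y => by rw [hq2_def]
    have hq20 : ∀ x y, 0 < q2 x y := fun x y => by
      rw [hq2eq]; exact lt_of_lt_of_le hP₀0 (le_max_right _ _)
    set κ : G → G → ℝ := fun x y => (β/2) * q2 x y ^ (-(β/2) - 1) + q2 x y ^ (-(β/2)) / R
      with hκ2_def
    have hκeq : ∀ x y, κ x y = (β/2) * q2 x y ^ (-(β/2) - 1) + q2 x y ^ (-(β/2)) / R :=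
      fun x y => by rw [hκ2_def]
    have hκ0 : ∀ x y, 0 ≤ κ x y := by
      intro x y
      rw [hκeq]
      have h1 : 0 ≤ q2 x y ^ (-(β/2) - 1) := rpow_nonneg (hq20 x y).le _
      have h2 : 0 ≤ q2 x y ^ (-(β/2)) := rpow_nonneg (hq20 x y).le _
      have h3 : (0:ℝ) ≤ β/2 := by linarith
      exact add_nonneg (mul_nonneg h3 h1) (div_nonneg h2 hRpos.le)
    have hκsymm : ∀ x y, κ x y = κ y x := by
      intro x y
      have e : q2 x y = q2 y x := by rw [hq2eq, hq2eq, min_comm]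
      rw [hκeq, hκeq, e]
    -- Lipschitz-type bound for P along edges
    have hPlip : ∀ x y, |P x - P y| ≤ κ x y * d x y := by
      intro x y
      rcases le_total (D y) (D x) with hyx | hxy
      · have hDd : D x - D y ≤ d x y := by
          have h := hDlip x y
          linarith [le_abs_self (D x - D y)]
        have h := aux_Plip (β := β) (R := R) (P₀ := P₀) (Dx := D x) (Dy := D y)
          (ηx := η x) (ηy := η y) (dxy := d x y) hβ hRpos hP₀0 (hD0 y) hyx
          (hη1 y) (hη0 y) (hηlip x y) hDd (hd_nonneg x y)
        have emin : min (D x) (D y) = D y := min_eq_right hyx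
        rw [hPeq x, hPeq y, hQeq x, hQeq y, hκeq x y, hq2eq x y, emin]
        exact h
      · have hDd : D y - D x ≤ d x y := by
          have h := hDlip y x
          rw [hd_symm y x] at h
          linarith [le_abs_self (D y - D x)]
        have hlip' : |η y - η x| ≤ d x y / R := by
          rw [abs_sub_comm]; exact hηlip x y
        have h := aux_Plip (β := β) (R := R) (P₀ := P₀) (Dx := D y) (Dy := D x)
          (ηx := η y) (ηy := η x) (dxy := d x y) hβ hRpos hP₀0 (hD0 x) hxy
          (hη1 x) (hη0 x) hlip' hDd (hd_nonneg x y)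
        have emin : min (D x) (D y) = D x := min_eq_left hxy
        rw [abs_sub_comm, hPeq x, hPeq y, hQeq x, hQeq y, hκeq x y, hq2eq x y, emin]
        exact h
    -- per-edge symmetrized inequality
    have hedge : ∀ x y, ω x y * (((g y - g x) - (f y - f x)^2) * W x)
        + ω x y * (((g x - g y) - (f y - f x)^2) * W y)
        ≤ ω x y * ((g x + g y) * (κ x y * d x y)^2) := by
      intro x y
      have hsc : ((g y - g x) - (f y - f x)^2) * W x + ((g x - g y) - (f y - f x)^2) * W y
          ≤ (g x + g y) * (κ x y * d x y)^2 := by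
        have h1 := aux_edge (f x) (f y) (P x) (P y) (κ x y * d x y) (hPlip x y)
        have e : ((g y - g x) - (f y - f x)^2) * W x + ((g x - g y) - (f y - f x)^2) * W y
            = (f y^2 - f x^2) * (P x^2 - P y^2) - (f y - f x)^2 * (P x^2 + P y^2) := by
          rw [hgeq x, hgeq y, hWeqP x, hWeqP y]; ring
        have e2 : (g x + g y) = (f x^2 + f y^2) := by rw [hgeq x, hgeq y]
        rw [e, e2]
        exact h1
      have h2 := mul_le_mul_of_nonneg_left hsc (hω_nonneg x y)
      calc ω x y * (((g y - g x) - (f y - f x)^2) * W x)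
          + ω x y * (((g x - g y) - (f y - f x)^2) * W y)
          = ω x y * ((((g y - g x) - (f y - f x)^2) * W x)
            + (((g x - g y) - (f y - f x)^2) * W y)) := by ring
        _ ≤ ω x y * ((g x + g y) * (κ x y * d x y)^2) := h2
    -- summed form of the equation
    have h1sum : ∀ x ∈ B, p * (μ x * (V x * (g x * W x)))
        ≤ ∑ y ∈ B, ω x y * (((g y - g x) - (f y - f x)^2) * W x) := by
      intro x hxB'
      by_cases hηx : η x = 0
      · rw [hWz x hηx]
        simp
      · have key1 : p * (μ x * (V x * (g x * W x)))
            = p * (|u x| ^ (p-2) * u x * W x) * ∑ y ∈ B, ω x y * (u y - u x) := by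
          rw [heqB x hηx, ← hgid x]
          ring
        rw [key1, Finset.mul_sum]
        apply Finset.sum_le_sum
        intro y hy
        have hkey := aux_key hp2 (u x) (u y)
        have hnn : 0 ≤ ω x y * W x := mul_nonneg (hω_nonneg x y) (hW0 x)
        have hmul := mul_le_mul_of_nonneg_left hkey hnn
        have eg : |u y| ^ p - |u x| ^ p = g y - g x := by rw [hgu, hgu]
        have ef : |u y| ^ (p/2) - |u x| ^ (p/2) = f y - f x := by rw [hfeq, hfeq]
        rw [eg, ef] at hmul
        calc p * (|u x| ^ (p-2) * u x * W x) * (ω x y * (u y - u x))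
            = (ω x y * W x) * (p * (|u x| ^ (p-2) * u x * (u y - u x))) := by ring
          _ ≤ (ω x y * W x) * ((g y - g x) - (f y - f x)^2) := hmul
          _ = ω x y * (((g y - g x) - (f y - f x)^2) * W x) := by ring
    -- symmetrization
    set S : ℝ := ∑ x ∈ B, ∑ y ∈ B, ω x y * (((g y - g x) - (f y - f x)^2) * W x) with hS_def
    have hswap : S = ∑ x ∈ B, ∑ y ∈ B, ω x y * (((g x - g y) - (f y - f x)^2) * W y) := by
      rw [hS_def, Finset.sum_comm]
      refine Finset.sum_congr rfl (fun a _ => Finset.sum_congr rfl (fun b _ => ?_))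
      rw [hω_symm b a]
      ring
    have hsum_ineq :
        (∑ x ∈ B, ∑ y ∈ B, ω x y * (((g y - g x) - (f y - f x)^2) * W x))
        + (∑ x ∈ B, ∑ y ∈ B, ω x y * (((g x - g y) - (f y - f x)^2) * W y))
        ≤ ∑ x ∈ B, ∑ y ∈ B, ω x y * ((g x + g y) * (κ x y * d x y)^2) := by
      rw [← Finset.sum_add_distrib]
      apply Finset.sum_le_sum
      intro x _
      rw [← Finset.sum_add_distrib]
      apply Finset.sum_le_sum
      intro y _
      exact hedge x y
    have hdouble : 2 * S ≤ ∑ x ∈ B, ∑ y ∈ B, ω x y * ((g x + g y) * (κ x y * d x y)^2) := by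
      have e1 := hS_def
      linarith [hsum_ineq, hswap, hS_def]
    -- bound the double sum via the intrinsic metric property
    have hsplit : ∑ x ∈ B, ∑ y ∈ B, ω x y * ((g x + g y) * (κ x y * d x y)^2)
        = 2 * ∑ x ∈ B, ∑ y ∈ B, ω x y * (g x * (κ x y * d x y)^2) := by
      have h1 : ∑ x ∈ B, ∑ y ∈ B, ω x y * (g y * (κ x y * d x y)^2)
          = ∑ x ∈ B, ∑ y ∈ B, ω x y * (g x * (κ x y * d x y)^2) := by
        rw [Finset.sum_comm]
        refine Finset.sum_congr rfl (fun a _ => Finset.sum_congr rfl (fun b _ => ?_))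
        rw [hω_symm b a, hκsymm b a, hd_symm b a]
      have h2 : ∑ x ∈ B, ∑ y ∈ B, ω x y * ((g x + g y) * (κ x y * d x y)^2)
          = ∑ x ∈ B, ∑ y ∈ B,
            (ω x y * (g x * (κ x y * d x y)^2) + ω x y * (g y * (κ x y * d x y)^2)) := by
        refine Finset.sum_congr rfl (fun a _ => Finset.sum_congr rfl (fun b _ => by ring))
      rw [h2]
      simp only [Finset.sum_add_distrib]
      rw [h1]
      ring
    have hCx0 : ∀ x, 0 ≤ c₁ ^ (-β-2) * ((β^2/2) * Q x ^ (-β-2) + 2 * Q x ^ (-β) / R^2) := by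
      intro x
      have h1 : 0 ≤ Q x ^ (-β-2) := rpow_nonneg (hQ0 x).le _
      have h2 : 0 ≤ Q x ^ (-β) := rpow_nonneg (hQ0 x).le _
      have h3 : 0 ≤ c₁ ^ (-β-2) := rpow_nonneg hc₁0.le _
      have h4 : (0:ℝ) ≤ β^2/2 := by positivity
      have h5 : (0:ℝ) < R^2 := by positivity
      apply mul_nonneg h3
      apply add_nonneg (mul_nonneg h4 h1) (div_nonneg (by linarith) h5.le)
    have hinner : ∀ x ∈ B, ∑ y ∈ B, ω x y * (g x * (κ x y * d x y)^2)
        ≤ g x * (μ x * (c₁ ^ (-β-2) * ((β^2/2) * Q x ^ (-β-2) + 2 * Q x ^ (-β) / R^2))) := by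
      intro x _
      have hterm : ∀ y, ω x y * (g x * (κ x y * d x y)^2)
          ≤ g x * (c₁ ^ (-β-2) * ((β^2/2) * Q x ^ (-β-2) + 2 * Q x ^ (-β) / R^2))
            * (ω x y * d x y ^ 2) := by
        intro y
        rcases eq_or_ne (ω x y) 0 with h0 | h0
        · rw [h0]; simp
        · have hωpos : 0 < ω x y := lt_of_le_of_ne (hω_nonneg x y) (Ne.symm h0)
          have hjmp := hjump x y hωpos
          have hq2c : c₁ * Q x ≤ q2 x y := by
            have hDyx : D x - s ≤ D y := by
              have h := hDlip x y
              have := le_abs_self (D x - D y)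
              linarith
            have hminD : D x - s ≤ min (D x) (D y) := le_min (by linarith [hs_pos]) hDyx
            have hcd : c₁ * D x ≤ D x - s := by
              rw [hc₁_def, div_mul_eq_mul_div, div_le_iff₀ hk0]
              nlinarith [hDk x, hs_pos]
            have h2 : c₁ * Q x = max (c₁ * D x) (c₁ * P₀) := by
              rw [hQeq x]
              exact mul_max_of_nonneg _ _ hc₁0.le
            have h3 : max (c₁ * D x) (c₁ * P₀) ≤ q2 x y := by
              rw [hq2eq x y]
              apply max_le
              · exact le_trans hcd (le_trans hminD (le_max_left _ _))
              · have h4 : c₁ * P₀ ≤ P₀ := by nlinarith [hP₀0, hc₁1, hc₁0]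
                exact le_trans h4 (le_max_right _ _)
            rw [h2]
            exact h3
          have hκsq : (κ x y)^2
              ≤ c₁ ^ (-β-2) * ((β^2/2) * Q x ^ (-β-2) + 2 * Q x ^ (-β) / R^2) := by
            rw [hκeq x y]
            exact aux_kappasq hβ hRpos hc₁0 hc₁1 (hQ0 x) hq2c
          have hnn2 : 0 ≤ g x * (ω x y * d x y^2) :=
            mul_nonneg (hg0 x) (mul_nonneg hωpos.le (sq_nonneg _))
          have h5 := mul_le_mul_of_nonneg_left hκsq hnn2
          calc ω x y * (g x * (κ x y * d x y)^2)
              = g x * (ω x y * d x y^2) * (κ x y)^2 := by ring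
            _ ≤ g x * (ω x y * d x y^2)
                * (c₁ ^ (-β-2) * ((β^2/2) * Q x ^ (-β-2) + 2 * Q x ^ (-β) / R^2)) := h5
            _ = g x * (c₁ ^ (-β-2) * ((β^2/2) * Q x ^ (-β-2) + 2 * Q x ^ (-β) / R^2))
                * (ω x y * d x y ^ 2) := by ring
      calc ∑ y ∈ B, ω x y * (g x * (κ x y * d x y)^2)
          ≤ ∑ y ∈ B, g x * (c₁ ^ (-β-2) * ((β^2/2) * Q x ^ (-β-2) + 2 * Q x ^ (-β) / R^2))
            * (ω x y * d x y ^ 2) := Finset.sum_le_sum (fun y _ => hterm y)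
        _ = g x * (c₁ ^ (-β-2) * ((β^2/2) * Q x ^ (-β-2) + 2 * Q x ^ (-β) / R^2))
            * ∑ y ∈ B, ω x y * d x y ^ 2 := by rw [← Finset.mul_sum]
        _ ≤ g x * (c₁ ^ (-β-2) * ((β^2/2) * Q x ^ (-β-2) + 2 * Q x ^ (-β) / R^2)) * μ x := by
            apply mul_le_mul_of_nonneg_left _ (mul_nonneg (hg0 x) (hCx0 x))
            have hsummable : Summable (fun y => ω x y * d x y ^ 2) := by
              apply summable_of_ne_finset_zero (s := (hloc x).toFinset)
              intro b hb
              have hz : ω x b = 0 := by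
                by_contra hne
                exact hb ((hloc x).mem_toFinset.mpr hne)
              rw [hz, zero_mul]
            have h6 := Summable.sum_le_tsum B
              (fun i _ => mul_nonneg (hω_nonneg x i) (sq_nonneg _)) hsummable
            exact le_trans h6 (hintrinsic x)
        _ = g x * (μ x * (c₁ ^ (-β-2) * ((β^2/2) * Q x ^ (-β-2) + 2 * Q x ^ (-β) / R^2))) := by
            ring
    -- the left-hand side
    have hFB : F ⊆ B := by
      intro x hx
      rw [hBmem]
      have h1 := hF x hx
      have h5 : d x₀ x = D x - k := by rw [hd_symm x₀ x, hDeq x]; ring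
      linarith [hs_pos, hk0, hR]
    have hstep1 : ∑ x ∈ F, T x ≤ ∑ x ∈ B, μ x * (g x * (D x ^ (-α) * W x)) := by
      have hptF : ∀ x ∈ F, T x = μ x * (g x * (D x ^ (-α) * W x)) := by
        intro x hx
        rw [hTeq x, hWeq2 x, hηone x (hF x hx)]
        ring
      rw [Finset.sum_congr rfl hptF]
      apply Finset.sum_le_sum_of_subset_of_nonneg hFB
      intro i _ _
      exact mul_nonneg (hμ i).le (mul_nonneg (hg0 i)
        (mul_nonneg (rpow_nonneg (hD0 i).le _) (hW0 i)))
    have hstep2 : ∀ x ∈ B, p * c₀ * (μ x * (g x * (D x ^ (-α) * W x)))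
        ≤ p * (μ x * (V x * (g x * W x))) := by
      intro x _
      have hVx : c₀ * D x ^ (-α) ≤ V x := hV x
      have hnn : 0 ≤ μ x * (g x * W x) :=
        mul_nonneg (hμ x).le (mul_nonneg (hg0 x) (hW0 x))
      have h6 := mul_le_mul_of_nonneg_right hVx hnn
      calc p * c₀ * (μ x * (g x * (D x ^ (-α) * W x)))
          = p * ((c₀ * D x ^ (-α)) * (μ x * (g x * W x))) := by ring
        _ ≤ p * (V x * (μ x * (g x * W x))) :=
            mul_le_mul_of_nonneg_left h6 (by linarith)
        _ = p * (μ x * (V x * (g x * W x))) := by ring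
    have hLHS : p * c₀ * ∑ x ∈ F, T x ≤ S := by
      calc p * c₀ * ∑ x ∈ F, T x
          ≤ p * c₀ * ∑ x ∈ B, μ x * (g x * (D x ^ (-α) * W x)) := by
            apply mul_le_mul_of_nonneg_left hstep1 (by positivity)
        _ = ∑ x ∈ B, p * c₀ * (μ x * (g x * (D x ^ (-α) * W x))) := Finset.mul_sum _ _ _
        _ ≤ ∑ x ∈ B, p * (μ x * (V x * (g x * W x))) := Finset.sum_le_sum hstep2
        _ ≤ ∑ x ∈ B, ∑ y ∈ B, ω x y * (((g y - g x) - (f y - f x)^2) * W x) :=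
            Finset.sum_le_sum h1sum
        _ = S := hS_def.symm
    -- pointwise split of the right-hand side
    have hlam_eq : p * c₀ * lam = β^2 * c₁ ^ (-β-2) * P₀ ^ (α-2) / 2 := by
      rw [hlam_def]
      field_simp
    have hptsplit : ∀ x,
        g x * (μ x * (c₁ ^ (-β-2) * ((β^2/2) * Q x ^ (-β-2) + 2 * Q x ^ (-β) / R^2)))
          ≤ p * c₀ * lam * T x + (2 * c₁ ^ (-β-2) / R^2) * Tw x := by
      intro x
      have hpt := aux_ptwise (α := α) (β := β) (P₀ := P₀) (Dx := D x) hα0 hα hβ hP₀0 (hD0 x)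
      rw [← hQeq x] at hpt
      have hnn : 0 ≤ g x * μ x * ((β^2/2) * c₁ ^ (-β-2)) :=
        mul_nonneg (mul_nonneg (hg0 x) (hμ x).le)
          (mul_nonneg (by positivity) (rpow_nonneg hc₁0.le _))
      have hmain := mul_le_mul_of_nonneg_left hpt hnn
      have e0 : g x * (μ x * (c₁ ^ (-β-2) * ((β^2/2) * Q x ^ (-β-2) + 2 * Q x ^ (-β) / R^2)))
          = g x * μ x * ((β^2/2) * c₁ ^ (-β-2)) * Q x ^ (-β-2)
            + (2 * c₁ ^ (-β-2) / R^2) * Tw x := by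
        rw [hTweq x, hweq x]
        ring
      have e1 : p * c₀ * lam * T x
          = g x * μ x * ((β^2/2) * c₁ ^ (-β-2)) * (P₀ ^ (α-2) * (D x ^ (-α) * Q x ^ (-β))) := by
        calc p * c₀ * lam * T x = (p * c₀ * lam) * T x := by ring
          _ = (β^2 * c₁ ^ (-β-2) * P₀ ^ (α-2) / 2) * (μ x * (g x * (D x ^ (-α) * w x))) := by
              rw [hlam_eq, hTeq x]
          _ = g x * μ x * ((β^2/2) * c₁ ^ (-β-2)) * (P₀ ^ (α-2) * (D x ^ (-α) * Q x ^ (-β))) := by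
              rw [hweq x]; ring
      rw [e0, e1]
      linarith [hmain]
    -- conclusion of the main inequality
    have hfinal : S ≤ p * c₀ * (lam * ∑' x, T x) + (2 * c₁ ^ (-β-2) / R^2) * ∑' x, Tw x := by
      have h1 : S ≤ ∑ x ∈ B,
          g x * (μ x * (c₁ ^ (-β-2) * ((β^2/2) * Q x ^ (-β-2) + 2 * Q x ^ (-β) / R^2))) := by
        have h2 := Finset.sum_le_sum hinner
        linarith [hdouble, hsplit, h2]
      have h3 : S ≤ ∑ x ∈ B, (p * c₀ * lam * T x + (2 * c₁ ^ (-β-2) / R^2) * Tw x) :=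
        le_trans h1 (Finset.sum_le_sum (fun x _ => hptsplit x))
      have h4 : ∑ x ∈ B, (p * c₀ * lam * T x + (2 * c₁ ^ (-β-2) / R^2) * Tw x)
          = p * c₀ * lam * ∑ x ∈ B, T x + (2 * c₁ ^ (-β-2) / R^2) * ∑ x ∈ B, Tw x := by
        rw [Finset.sum_add_distrib, ← Finset.mul_sum, ← Finset.mul_sum]
      have h5 : ∑ x ∈ B, T x ≤ ∑' x, T x := Summable.sum_le_tsum B (fun i _ => hT0 i) hTsum
      have h6 : ∑ x ∈ B, Tw x ≤ ∑' x, Tw x := Summable.sum_le_tsum B (fun i _ => hTw0 i) hTwsum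
      have hc1 : (0:ℝ) ≤ p * c₀ * lam := by positivity
      have hc2 : (0:ℝ) ≤ 2 * c₁ ^ (-β-2) / R^2 := by
        have := rpow_nonneg hc₁0.le (-β-2)
        positivity
      calc S ≤ p * c₀ * lam * ∑ x ∈ B, T x + (2 * c₁ ^ (-β-2) / R^2) * ∑ x ∈ B, Tw x := by
            rw [← h4]; exact h3
        _ ≤ p * c₀ * lam * ∑' x, T x + (2 * c₁ ^ (-β-2) / R^2) * ∑' x, Tw x :=
            add_le_add (mul_le_mul_of_nonneg_left h5 hc1) (mul_le_mul_of_nonneg_left h6 hc2)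
        _ = p * c₀ * (lam * ∑' x, T x) + (2 * c₁ ^ (-β-2) / R^2) * ∑' x, Tw x := by ring
    linarith [hLHS, hfinal]
  -- pass to the limit R → ∞
  have hFle : ∀ F : Finset G, ∑ x ∈ F, T x ≤ lam * ∑' x, T x := by
    intro F
    have hdiv : ∀ ε : ℝ, 0 < ε →
        p * c₀ * ∑ x ∈ F, T x ≤ p * c₀ * (lam * ∑' x, T x) + ε := by
      intro ε hε
      set C' : ℝ := 2 * c₁ ^ (-β-2) * ∑' x, Tw x with hC'_def
      have hC'0 : 0 ≤ C' := by
        have : (0:ℝ) ≤ ∑' x, Tw x := tsum_nonneg hTw0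
        have : (0:ℝ) ≤ ∑' x, Tw x := tsum_nonneg hTw0
        positivity
      obtain ⟨n, hn⟩ := exists_nat_gt (max (max 1 (∑ x ∈ F, D x)) (C'/ε))
      set R : ℝ := (n : ℝ) with hR_def
      have hR1 : 1 ≤ R := by
        have h1 : (1:ℝ) ≤ max (max 1 (∑ x ∈ F, D x)) (C'/ε) :=
          le_trans (le_max_left _ _) (le_max_left _ _)
        exact le_trans h1 hn.le
      have hRpos : 0 < R := lt_of_lt_of_le one_pos hR1
      have hRD : ∀ x ∈ F, D x ≤ R := by
        intro x hx
        have h1 : D x ≤ ∑ y ∈ F, D y :=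
          Finset.single_le_sum (fun i _ => (hD0 i).le) hx
        have h2 : (∑ y ∈ F, D y) ≤ max (max 1 (∑ y ∈ F, D y)) (C'/ε) :=
          le_trans (le_max_right _ _) (le_max_left _ _)
        linarith [hn]
      have h := main R hR1 F hRD
      have h1 : (2 * c₁ ^ (-β-2) / R^2) * ∑' x, Tw x = C'/R^2 := by
        rw [hC'_def]; ring
      have hRR : R ≤ R^2 := by nlinarith [hR1, hRpos]
      have h2 : C'/R^2 ≤ C'/R := by
        rw [div_le_div_iff₀ (by positivity) hRpos]
        nlinarith [hC'0, hRR, hRpos]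
      have h3 : C'/R < ε := by
        rcases eq_or_lt_of_le hC'0 with hC0 | hC0
        · rw [← hC0]; simpa using hε
        · rw [div_lt_iff₀ hRpos]
          have h4 : C'/ε < R := lt_of_le_of_lt (le_max_right _ _) hn
          rw [div_lt_iff₀ hε] at h4
          linarith
      linarith [h]
    have hmul := le_of_forall_pos_le_add hdiv
    exact le_of_mul_le_mul_left hmul hpc
  have hTsum_le : ∑' x, T x ≤ lam * ∑' x, T x := Summable.tsum_le_of_sum_le hTsum hFle
  have hTtot0 : ∑' x, T x ≤ 0 := by
    by_contra hpos
    push_neg at hpos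
    have := mul_lt_mul_of_pos_right hlam1 hpos
    rw [one_mul] at this
    linarith
  intro x
  by_contra hux
  have habs : 0 < |u x| := abs_pos.mpr hux
  have hfx : 0 < f x := rpow_pos_of_pos habs _
  have hgx : 0 < g x := pow_pos hfx 2
  have hTx : 0 < T x :=
    mul_pos (hμ x) (mul_pos hgx (mul_pos (rpow_pos_of_pos (hD0 x) _) (hw0 x)))
  have hle := Summable.le_tsum hTsum x (fun j _ => hT0 j)
  linarith
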